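/- Let (Ω, F, P) be a probability space and X ∈ L²(P). Then E[φ(X)] = sup over bounded measurable λ : Ω → ℝ of E[λX − φ*(λ)], and the supremum is achieved exactly when λ = φ'(X) = tanh(X + h) almost surely. -/

import Mathlib

open MeasureTheory

noncomputable def phi (h x : ℝ) : ℝ := Real.log (Real.cosh (x + h))

/-- The real-valued formula for the convex dual `φ*` of `φ`, valid on `[-1,1]`
(outside of `[-1,1]`, the true convex dual is `+∞`). -/
noncomputable def phiStarFormula (h lam : ℝ) : ℝ :=
  1 / 2 * ((1 + lam) * Real.log (1 + lam) + (1 - lam) * Real.log (1 - lam)) - lam * h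

section aux

lemma one_add_tanh_eq (y : ℝ) : 1 + Real.tanh y = Real.exp y / Real.cosh y := by
  have hc := Real.cosh_pos y
  rw [Real.tanh_eq_sinh_div_cosh]
  field_simp
  rw [Real.cosh_add_sinh]

lemma one_sub_tanh_eq (y : ℝ) : 1 - Real.tanh y = Real.exp (-y) / Real.cosh y := by
  have hc := Real.cosh_pos y
  rw [Real.tanh_eq_sinh_div_cosh]
  field_simp
  rw [Real.cosh_sub_sinh]

lemma one_add_tanh_pos (y : ℝ) : 0 < 1 + Real.tanh y := by
  rw [one_add_tanh_eq]; positivity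

lemma one_sub_tanh_pos (y : ℝ) : 0 < 1 - Real.tanh y := by
  rw [one_sub_tanh_eq]; positivity

lemma abs_tanh_lt_one (y : ℝ) : |Real.tanh y| < 1 := by
  rw [abs_lt]
  constructor <;> nlinarith [one_add_tanh_pos y, one_sub_tanh_pos y]

lemma log_one_add_tanh (y : ℝ) :
    Real.log (1 + Real.tanh y) = y - Real.log (Real.cosh y) := by
  rw [one_add_tanh_eq, Real.log_div (Real.exp_ne_zero y) (Real.cosh_pos y).ne',
    Real.log_exp]

lemma log_one_sub_tanh (y : ℝ) :
    Real.log (1 - Real.tanh y) = -y - Real.log (Real.cosh y) := by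
  rw [one_sub_tanh_eq, Real.log_div (Real.exp_ne_zero (-y)) (Real.cosh_pos y).ne',
    Real.log_exp]

lemma kl_aux {u v : ℝ} (hu : 0 ≤ u) (hv : 0 < v) :
    u - v ≤ u * (Real.log u - Real.log v) := by
  rcases eq_or_lt_of_le hu with h | h
  · simp [← h]; linarith
  · have h1 : Real.log (v / u) ≤ v / u - 1 := Real.log_le_sub_one_of_pos (by positivity)
    rw [Real.log_div hv.ne' h.ne'] at h1
    have h2 : u * (Real.log v - Real.log u) ≤ u * (v / u - 1) := by
      exact mul_le_mul_of_nonneg_left h1 hu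
    have h3 : u * (v / u - 1) = v - u := by field_simp
    rw [mul_sub]
    linarith

lemma kl_aux_strict {u v : ℝ} (hu : 0 ≤ u) (hv : 0 < v) (hne : u ≠ v) :
    u - v < u * (Real.log u - Real.log v) := by
  rcases eq_or_lt_of_le hu with h | h
  · simp [← h]; linarith
  · have hvu : v / u ≠ 1 := by
      intro hc
      exact hne ((div_eq_one_iff_eq h.ne').mp hc).symm
    have h1 : Real.log (v / u) < v / u - 1 :=
      Real.log_lt_sub_one_of_pos (by positivity) hvu
    rw [Real.log_div hv.ne' h.ne'] at h1
    have h2 : u * (Real.log v - Real.log u) < u * (v / u - 1) :=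
      (mul_lt_mul_iff_right₀ h).mpr h1
    have h3 : u * (v / u - 1) = v - u := by field_simp
    rw [mul_sub]
    linarith

lemma keyD (h x lam : ℝ) :
    phi h x - (lam * x - phiStarFormula h lam)
      = 1 / 2 * ((1 + lam) * (Real.log (1 + lam) - Real.log (1 + Real.tanh (x + h)))
        + (1 - lam) * (Real.log (1 - lam) - Real.log (1 - Real.tanh (x + h)))) := by
  rw [log_one_add_tanh, log_one_sub_tanh]
  unfold phi phiStarFormula
  ring

lemma dual_le (h x lam : ℝ) (hlam : |lam| ≤ 1) :
    lam * x - phiStarFormula h lam ≤ phi h x := by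
  rw [abs_le] at hlam
  have h1 := kl_aux (u := 1 + lam) (v := 1 + Real.tanh (x + h))
    (by linarith [hlam.1]) (one_add_tanh_pos (x + h))
  have h2 := kl_aux (u := 1 - lam) (v := 1 - Real.tanh (x + h))
    (by linarith [hlam.2]) (one_sub_tanh_pos (x + h))
  have := keyD h x lam
  linarith

lemma dual_eq_iff (h x lam : ℝ) (hlam : |lam| ≤ 1) :
    lam * x - phiStarFormula h lam = phi h x ↔ lam = Real.tanh (x + h) := by
  constructor
  · intro heq
    by_contra hne
    have h1 := kl_aux_strict (u := 1 + lam) (v := 1 + Real.tanh (x + h))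
      (by rw [abs_le] at hlam; linarith [hlam.1]) (one_add_tanh_pos (x + h))
      (by intro hc; exact hne (by linarith))
    have h2 := kl_aux (u := 1 - lam) (v := 1 - Real.tanh (x + h))
      (by rw [abs_le] at hlam; linarith [hlam.2]) (one_sub_tanh_pos (x + h))
    have := keyD h x lam
    linarith
  · intro heq
    subst heq
    have := keyD h x (Real.tanh (x + h))
    simp at this
    linarith

end aux

section measure_aux

lemma phiStar_continuous (h : ℝ) : Continuous (phiStarFormula h) := by
  unfold phiStarFormula
  have h1 : Continuous fun lam : ℝ => (1 + lam) * Real.log (1 + lam) :=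
    Real.continuous_mul_log.comp (continuous_const.add continuous_id)
  have h2 : Continuous fun lam : ℝ => (1 - lam) * Real.log (1 - lam) :=
    Real.continuous_mul_log.comp (continuous_const.sub continuous_id)
  exact (continuous_const.mul (h1.add h2)).sub (continuous_id.mul continuous_const)

lemma phi_continuous (h : ℝ) : Continuous (phi h) := by
  unfold phi
  exact (Real.continuous_cosh.comp (continuous_id.add continuous_const)).log
    fun x => (Real.cosh_pos _).ne'

lemma abs_phi_le (h x : ℝ) : |phi h x| ≤ |x| + |h| := by
  unfold phi
  rw [abs_of_nonneg (Real.log_nonneg (Real.one_le_cosh _))]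
  have h1 : Real.cosh (x + h) ≤ Real.exp |x + h| := by
    rw [Real.cosh_eq]
    have e1 := Real.exp_le_exp.mpr (le_abs_self (x + h))
    have e2 := Real.exp_le_exp.mpr (neg_le_abs (x + h))
    linarith
  calc Real.log (Real.cosh (x + h)) ≤ Real.log (Real.exp |x + h|) :=
        Real.log_le_log (Real.cosh_pos _) h1
    _ = |x + h| := Real.log_exp _
    _ ≤ |x| + |h| := abs_add_le _ _

lemma integrable_dual_integrand {Ω : Type*} [MeasurableSpace Ω] (μ : Measure Ω)
    [IsProbabilityMeasure μ] (h : ℝ) (X l : Ω → ℝ) (hXint : Integrable X μ)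
    (hl : Measurable l) (C : ℝ) (hC : ∀ ω, |l ω| ≤ C) :
    Integrable (fun ω => l ω * X ω - phiStarFormula h (l ω)) μ := by
  have h1 : Integrable (fun ω => l ω * X ω) μ :=
    hXint.bdd_mul hl.aestronglyMeasurable (ae_of_all _ fun ω => (by simpa using hC ω : ‖l ω‖ ≤ C))
  have h2 : Integrable (fun ω => phiStarFormula h (l ω)) μ := by
    obtain ⟨M, hM⟩ := (isCompact_Icc (a := -C) (b := C)).exists_bound_of_continuousOn
      (phiStar_continuous h).continuousOn
    refine (integrable_const M).mono'
      (((phiStar_continuous h).measurable.comp hl).aestronglyMeasurable) ?_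
    filter_upwards with ω
    exact hM _ (Set.mem_Icc.mpr (abs_le.mp (hC ω)))
  exact h1.sub h2

lemma integrable_phiX {Ω : Type*} [MeasurableSpace Ω] (μ : Measure Ω)
    [IsProbabilityMeasure μ] (h : ℝ) (X : Ω → ℝ) (hX : MemLp X 2 μ) :
    Integrable (fun ω => phi h (X ω)) μ := by
  have hXint : Integrable X μ := hX.integrable (by norm_num)
  refine (hXint.abs.add (integrable_const |h|)).mono'
    ((phi_continuous h).comp_aestronglyMeasurable hX.aestronglyMeasurable) ?_
  filter_upwards with ω
  simpa using abs_phi_le h (X ω)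

end measure_aux

open Classical in
/-- The value `E[λ X - φ*(λ)]`, interpreted as `-∞` when `E[φ*(λ)] = +∞`, i.e. when
`λ` does not take values in `[-1,1]` almost surely. -/
noncomputable def dualValue {Ω : Type*} [MeasurableSpace Ω] (μ : Measure Ω) (h : ℝ)
    (X l : Ω → ℝ) : EReal :=
  if ∀ᵐ ω ∂μ, |l ω| ≤ 1
    then ((∫ ω, (l ω * X ω - phiStarFormula h (l ω)) ∂μ : ℝ) : EReal)
    else ⊥

theorem stmt6 {Ω : Type*} [MeasurableSpace Ω] (μ : Measure Ω) [IsProbabilityMeasure μ]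
    (h : ℝ) (X : Ω → ℝ) (hX : MemLp X 2 μ) :
    (⨆ l : {l : Ω → ℝ // Measurable l ∧ ∃ C : ℝ, ∀ ω, |l ω| ≤ C},
        dualValue μ h X l.1) = ((∫ ω, phi h (X ω) ∂μ : ℝ) : EReal) ∧
    ∀ l : Ω → ℝ, Measurable l → (∃ C : ℝ, ∀ ω, |l ω| ≤ C) →
      (dualValue μ h X l = ((∫ ω, phi h (X ω) ∂μ : ℝ) : EReal)
        ↔ l =ᵐ[μ] fun ω => Real.tanh (X ω + h)) := by
  have hXint : Integrable X μ := hX.integrable (by norm_num)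
  have hphiX := integrable_phiX μ h X hX
  have key_le : ∀ l : Ω → ℝ, Measurable l → (∃ C : ℝ, ∀ ω, |l ω| ≤ C) →
      dualValue μ h X l ≤ ((∫ ω, phi h (X ω) ∂μ : ℝ) : EReal) := by
    rintro l hl ⟨C, hC⟩
    rw [dualValue]
    split_ifs with hae
    · rw [EReal.coe_le_coe_iff]
      refine integral_mono_ae (integrable_dual_integrand μ h X l hXint hl C hC) hphiX ?_
      filter_upwards [hae] with ω hω using dual_le h (X ω) (l ω) hω
    · exact bot_le
  have key_eq : ∀ l : Ω → ℝ, (l =ᵐ[μ] fun ω => Real.tanh (X ω + h)) →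
      dualValue μ h X l = ((∫ ω, phi h (X ω) ∂μ : ℝ) : EReal) := by
    intro l hlae
    have hae1 : ∀ᵐ ω ∂μ, |l ω| ≤ 1 := by
      filter_upwards [hlae] with ω hω
      rw [hω]; exact (abs_tanh_lt_one _).le
    rw [dualValue, if_pos hae1, EReal.coe_eq_coe_iff]
    refine integral_congr_ae ?_
    filter_upwards [hlae] with ω hω
    rw [hω]
    exact (dual_eq_iff h (X ω) _ (abs_tanh_lt_one _).le).mpr rfl
  have hct : Continuous Real.tanh := by
    have hre : Real.tanh = fun y => Real.sinh y / Real.cosh y :=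
      funext fun y => Real.tanh_eq_sinh_div_cosh y
    rw [hre]
    exact Real.continuous_sinh.div Real.continuous_cosh fun x => (Real.cosh_pos x).ne'
  constructor
  · refine le_antisymm (iSup_le fun l => key_le l.1 l.2.1 l.2.2) ?_
    set X' := hX.aestronglyMeasurable.mk X with hX'def
    have hX'm : Measurable X' := hX.aestronglyMeasurable.stronglyMeasurable_mk.measurable
    have hXX' : X =ᵐ[μ] X' := hX.aestronglyMeasurable.ae_eq_mk
    set l₀ : Ω → ℝ := fun ω => Real.tanh (X' ω + h) with hl₀def
    have hl₀m : Measurable l₀ := hct.measurable.comp (hX'm.add_const h)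
    have hl₀ae : l₀ =ᵐ[μ] fun ω => Real.tanh (X ω + h) := by
      filter_upwards [hXX'] with ω hω
      rw [hl₀def]
      simp only [hω]
    rw [← key_eq l₀ hl₀ae]
    exact le_iSup (fun l : {l : Ω → ℝ // Measurable l ∧ ∃ C : ℝ, ∀ ω, |l ω| ≤ C} =>
      dualValue μ h X l.1) ⟨l₀, hl₀m, 1, fun ω => (abs_tanh_lt_one _).le⟩
  · rintro l hl ⟨C, hC⟩
    constructor
    · intro heq
      by_cases hae : ∀ᵐ ω ∂μ, |l ω| ≤ 1
      · rw [dualValue, if_pos hae, EReal.coe_eq_coe_iff] at heq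
        have hint := integrable_dual_integrand μ h X l hXint hl C hC
        have h0 : ∫ ω, (phi h (X ω) - (l ω * X ω - phiStarFormula h (l ω))) ∂μ = 0 := by
          rw [integral_sub hphiX hint, heq, sub_self]
        have hnn : 0 ≤ᵐ[μ] fun ω => phi h (X ω) - (l ω * X ω - phiStarFormula h (l ω)) := by
          filter_upwards [hae] with ω hω
          exact sub_nonneg.mpr (dual_le h (X ω) (l ω) hω)
        have hz := (integral_eq_zero_iff_of_nonneg_ae hnn (hphiX.sub hint)).mp h0
        filter_upwards [hae, hz] with ω h1 h2
        have h2' : phi h (X ω) - (l ω * X ω - phiStarFormula h (l ω)) = 0 := by simpa using h2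
        exact (dual_eq_iff h (X ω) (l ω) h1).mp (by linarith)
      · rw [dualValue, if_neg hae] at heq
        exact absurd heq.symm (EReal.coe_ne_bot _)
    · exact key_eq l
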